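/- There is an absolute constant A > 0 such that the following holds (part 1 of the Estimator Lemma). Let N ≥ 1, let F be a real N×N orthogonal matrix (FᵀF = I), let U ≥ 0 satisfy |F[i,j]| ≤ U for all i,j, let ζ ∈ (0, 1/2], and let â, q̂ ∈ ℝ^N with â ≠ 0 and ‖q̂‖₂ ≤ ζ‖â‖₂. Set u = Fᵀ(â + q̂) and let τ be any real with τ ≥ ‖â‖₁·U. Let μ ∈ (0,1) and let T₁ be an integer with T₁ ≥ A·N·τ²·log(2/μ)/(ζ²·‖â‖₂²). If J : {1,…,T₁} → {0,…,N−1} is a uniformly random function (i.e., T₁ i.i.d. uniform indices sampled with replacement) and Θ(J) = (N/T₁)·Σ_{i=1}^{T₁} min(|u[J(i)]|, τ)², then with probability at least 1 − μ one has |Θ(J) − ‖u‖₂²| ≤ 9ζ·‖u‖₂². -/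

import Mathlib

lemma chord_exp {s b x : ℝ} (hb : 0 < b) (hx0 : 0 ≤ x) (hxb : x ≤ b) :
    Real.exp (s * x) ≤ 1 + (x / b) * (Real.exp (s * b) - 1) := by
  have ht0 : 0 ≤ x / b := div_nonneg hx0 hb.le
  have ht1 : x / b ≤ 1 := (div_le_one hb).2 hxb
  have h := convexOn_exp.2 (Set.mem_univ (0:ℝ)) (Set.mem_univ (s*b))
    (by linarith : (0:ℝ) ≤ 1 - x/b) ht0 (by ring)
  have harg : (1 - x/b) • (0:ℝ) + (x/b) • (s*b) = s * x := by
    simp only [smul_eq_mul, mul_zero, zero_add]; field_simp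
  rw [harg] at h
  calc Real.exp (s * x) ≤ (1 - x/b) • Real.exp 0 + (x/b) • Real.exp (s*b) := h
    _ = 1 + (x / b) * (Real.exp (s * b) - 1) := by
        simp [smul_eq_mul, Real.exp_zero]; ring

lemma exp_quad {y : ℝ} (h : |y| ≤ 1) : Real.exp y ≤ 1 + y + y ^ 2 := by
  have h2 := Real.exp_bound h (n := 2) (by norm_num)
  have hsum : ∑ m ∈ Finset.range 2, y ^ m / m.factorial = 1 + y := by
    simp [Finset.sum_range_succ]
  rw [hsum] at h2
  norm_num [Nat.factorial] at h2
  have h3 := (abs_sub_le_iff.1 h2).1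
  have hy2 : |y| ^ 2 = y ^ 2 := sq_abs y
  nlinarith [sq_nonneg y]

lemma le_of_sq_le_sq'' {X Y : ℝ} (h : X ^ 2 ≤ Y ^ 2) (hY : 0 ≤ Y) : X ≤ Y := by
  nlinarith [sq_nonneg (X - Y), sq_nonneg (X + Y)]

lemma arith_Elb {a2 q2 E sa sq ip ζ : ℝ} (hsa2 : sa ^ 2 = a2) (hsq2 : sq ^ 2 = q2)
    (hsa0 : 0 < sa) (hsq0 : 0 ≤ sq) (hq : sq ≤ ζ * sa) (hζ2 : ζ ≤ 1 / 2)
    (hip' : -(sa * sq) ≤ ip) (hE : E = a2 + 2 * ip + q2) : a2 ≤ 4 * E := by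
  have hle : sq ≤ sa / 2 := by nlinarith [mul_nonneg (by linarith : (0:ℝ) ≤ 1/2 - ζ) hsa0.le]
  nlinarith [sq_nonneg (sa - sq)]

lemma arith_trunc {uj vj wj mj τ : ℝ} (hw : |wj| ≤ τ) (hτ : 0 ≤ τ)
    (huv : uj = wj + vj) (hmj : mj = min |uj| τ) :
    uj ^ 2 - mj ^ 2 ≤ 2 * (|vj| * |uj|) := by
  have h1 : mj ≤ |uj| := hmj ▸ min_le_left _ _
  have h2 : 0 ≤ mj := hmj ▸ le_min (abs_nonneg _) hτ
  have h3 : |uj| - |vj| ≤ mj := by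
    rw [hmj]
    apply le_min
    · linarith [abs_nonneg vj]
    · have : |uj| ≤ |wj| + |vj| := by rw [huv]; exact abs_add_le _ _
      linarith
  nlinarith [sq_abs uj, abs_nonneg vj, abs_nonneg uj]

open Finset in
lemma core_count {N T : ℕ} (q : Fin N → ℝ) (e : ℝ) (S : Finset (Fin T → Fin N))
    (hS : ∀ J ∈ S, e ≤ ∑ i, q (J i)) :
    (S.card : ℝ) * Real.exp e ≤ (∑ j, Real.exp (q j)) ^ T := by
  have hpow : (∑ j, Real.exp (q j)) ^ T
      = ∑ J : Fin T → Fin N, ∏ i, Real.exp (q (J i)) := by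
    have h := Finset.sum_pow' (Finset.univ : Finset (Fin N))
      (fun j => Real.exp (q j)) T
    rwa [Fintype.piFinset_univ] at h
  calc (S.card : ℝ) * Real.exp e = ∑ _J ∈ S, Real.exp e := by
        rw [Finset.sum_const, nsmul_eq_mul]
    _ ≤ ∑ J ∈ S, Real.exp (∑ i, q (J i)) :=
        Finset.sum_le_sum fun J hJ => Real.exp_le_exp.2 (hS J hJ)
    _ ≤ ∑ J : Fin T → Fin N, Real.exp (∑ i, q (J i)) :=
        Finset.sum_le_sum_of_subset_of_nonneg (Finset.subset_univ S)
          (fun _ _ _ => (Real.exp_pos _).le)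
    _ = ∑ J : Fin T → Fin N, ∏ i, Real.exp (q (J i)) :=
        Finset.sum_congr rfl fun J _ => Real.exp_sum _ _
    _ = (∑ j, Real.exp (q j)) ^ T := hpow.symm

lemma mgf_le {N : ℕ} (hN : 0 < N) (p : Fin N → ℝ) (b s : ℝ) (hb : 0 < b)
    (hp0 : ∀ j, 0 ≤ p j) (hpb : ∀ j, p j ≤ b) :
    ∑ j, Real.exp (s * p j)
      ≤ (N : ℝ) * Real.exp ((∑ j, p j) / ((N:ℝ) * b) * (Real.exp (s * b) - 1)) := by
  have hNR : (0:ℝ) < N := by exact_mod_cast hN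
  have h1 : ∑ j, Real.exp (s * p j) ≤ (N:ℝ) + (∑ j, p j) / b * (Real.exp (s * b) - 1) := by
    calc ∑ j, Real.exp (s * p j) ≤ ∑ j, (1 + (p j / b) * (Real.exp (s * b) - 1)) :=
          Finset.sum_le_sum fun j _ => chord_exp hb (hp0 j) (hpb j)
      _ = (N:ℝ) + (∑ j, p j) / b * (Real.exp (s * b) - 1) := by
          rw [Finset.sum_add_distrib]
          simp [Finset.sum_div, Finset.sum_mul, div_mul_eq_mul_div]
  set y := (∑ j, p j) / ((N:ℝ) * b) * (Real.exp (s * b) - 1) with hy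
  have h2 : 1 + y ≤ Real.exp y := by linarith [Real.add_one_le_exp y]
  have h3 : (N:ℝ) + (∑ j, p j) / b * (Real.exp (s * b) - 1) = (N:ℝ) * (1 + y) := by
    rw [hy]; field_simp
  rw [h3] at h1
  exact h1.trans (by nlinarith [Real.exp_pos y])

lemma tail_gen {N T : ℕ} (hN : 0 < N) (p : Fin N → ℝ) (b e σ : ℝ) (hb : 0 < b)
    (hp0 : ∀ j, 0 ≤ p j) (hpb : ∀ j, p j ≤ b)
    (S : Finset (Fin T → Fin N)) (hS : ∀ J ∈ S, e ≤ ∑ i, σ * p (J i)) :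
    (S.card : ℝ) ≤ (N:ℝ) ^ T *
      Real.exp ((T:ℝ) * ((∑ j, p j) / ((N:ℝ) * b)) * (Real.exp (σ * b) - 1) - e) := by
  have h1 := core_count (fun j => σ * p j) e S hS
  have h2 := mgf_le hN p b σ hb hp0 hpb
  set M := (∑ j, p j) / ((N:ℝ) * b) * (Real.exp (σ * b) - 1) with hM
  have h3 : (∑ j, Real.exp (σ * p j)) ^ T ≤ ((N:ℝ) * Real.exp M) ^ T :=
    pow_le_pow_left₀ (Finset.sum_nonneg fun j _ => (Real.exp_pos _).le) h2 T
  have h4 : ((N:ℝ) * Real.exp M) ^ T = (N:ℝ)^T * Real.exp ((T:ℝ) * M) := by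
    rw [mul_pow, Real.exp_nat_mul]
  have h5 : (S.card : ℝ) * Real.exp e ≤ (N:ℝ)^T * Real.exp ((T:ℝ) * M) := by
    rw [← h4]; exact h1.trans h3
  have h6 : (N:ℝ)^T * Real.exp ((T:ℝ) * M) = ((N:ℝ)^T * Real.exp ((T:ℝ) * M - e)) * Real.exp e := by
    rw [mul_assoc, ← Real.exp_add]; ring_nf
  rw [h6] at h5
  have h7 := (mul_le_mul_iff_of_pos_right (Real.exp_pos e)).1 h5
  calc (S.card : ℝ) ≤ (N:ℝ)^T * Real.exp ((T:ℝ)*M - e) := h7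
    _ = _ := by rw [hM]; ring_nf

lemma isom {N : ℕ} (F : Matrix (Fin N) (Fin N) ℝ) (hF : F.transpose * F = 1)
    (x : Fin N → ℝ) :
    ∑ j, (F.transpose.mulVec x j) ^ 2 = ∑ i, x i ^ 2 := by
  have h1 : F * F.transpose = 1 := mul_eq_one_comm.mp hF
  set y := F.transpose.mulVec x with hy
  have hdot : ∑ j, y j ^ 2 = dotProduct y y := by
    simp [dotProduct, sq]
  have hdx : ∑ i, x i ^ 2 = dotProduct x x := by
    simp [dotProduct, sq]
  rw [hdot, hdx]
  calc dotProduct y y = dotProduct y (F.transpose.mulVec x) := rfl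
    _ = dotProduct (Matrix.vecMul y F.transpose) x := Matrix.dotProduct_mulVec _ _ _
    _ = dotProduct (F.mulVec y) x := by rw [Matrix.vecMul_transpose]
    _ = dotProduct ((F * F.transpose).mulVec x) x := by
        rw [hy, ← Matrix.mulVec_mulVec]
    _ = dotProduct x x := by rw [h1, Matrix.one_mulVec]

set_option maxHeartbeats 1000000 in
open Classical in
/-- Part 1 of the Estimator Lemma: the truncated sampled estimator of `‖u‖₂²`
is accurate with probability at least `1 - μ`. -/
theorem stmt_3 :
    ∃ A : ℝ, 0 < A ∧
      ∀ N : ℕ, 1 ≤ N →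
      ∀ F : Matrix (Fin N) (Fin N) ℝ, F.transpose * F = 1 →
      ∀ U : ℝ, 0 ≤ U → (∀ i j, |F i j| ≤ U) →
      ∀ ζ : ℝ, 0 < ζ → ζ ≤ 1 / 2 →
      ∀ ahat qhat : Fin N → ℝ, ahat ≠ 0 →
      Real.sqrt (∑ i, qhat i ^ 2) ≤ ζ * Real.sqrt (∑ i, ahat i ^ 2) →
      ∀ u : Fin N → ℝ, u = F.transpose.mulVec (ahat + qhat) →
      ∀ τ : ℝ, (∑ i, |ahat i|) * U ≤ τ →
      ∀ μ : ℝ, 0 < μ → μ < 1 →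
      ∀ T1 : ℕ,
        A * N * τ ^ 2 * Real.log (2 / μ) / (ζ ^ 2 * ∑ i, ahat i ^ 2) ≤ T1 →
      (1 - μ) * (Fintype.card (Fin T1 → Fin N) : ℝ) ≤
        ((Finset.univ.filter (fun J : Fin T1 → Fin N =>
          |(N : ℝ) / (T1 : ℝ) * ∑ i : Fin T1, (min |u (J i)| τ) ^ 2 - ∑ i, u i ^ 2| ≤
            9 * ζ * ∑ i, u i ^ 2)).card : ℝ) := by
  refine ⟨8, by norm_num, ?_⟩
  intro N hN F hF U hU hFU ζ hζ0 hζ2 ahat qhat ha hq u hu τ hτ μ hμ0 hμ1 T1 hT1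
  have hNR : (0:ℝ) < N := by exact_mod_cast hN
  -- basic positivity
  obtain ⟨i₁, hi₁0⟩ := Function.ne_iff.1 ha
  have hi₁ : ahat i₁ ≠ 0 := hi₁0
  have ha2 : 0 < ∑ i, ahat i ^ 2 :=
    Finset.sum_pos' (fun i _ => sq_nonneg _) ⟨i₁, Finset.mem_univ _, by positivity⟩
  set a2 := ∑ i, ahat i ^ 2 with ha2def
  set q2 := ∑ i, qhat i ^ 2 with hq2def
  have hq2nn : 0 ≤ q2 := Finset.sum_nonneg fun i _ => sq_nonneg _
  have hl1 : 0 < ∑ i, |ahat i| :=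
    Finset.sum_pos' (fun i _ => abs_nonneg _) ⟨i₁, Finset.mem_univ _, abs_pos.2 hi₁⟩
  have hU0 : 0 < U := by
    rcases hU.lt_or_eq with h | h
    · exact h
    · exfalso
      have hF0 : ∀ i j, F i j = 0 := fun i j =>
        abs_eq_zero.1 (le_antisymm (h ▸ hFU i j) (abs_nonneg _))
      have i0 : Fin N := ⟨0, hN⟩
      have := congrFun (congrFun hF i0) i0
      simp [Matrix.mul_apply, Matrix.one_apply, hF0] at this
  have hτ0 : 0 < τ := lt_of_lt_of_le (mul_pos hl1 hU0) hτ
  set b := τ ^ 2 with hbdef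
  have hb : 0 < b := by positivity
  set L := Real.log (2 / μ) with hLdef
  have hL0 : 0 < L := Real.log_pos ((one_lt_div hμ0).2 (by linarith))
  -- vectors
  set w := F.transpose.mulVec ahat with hwdef
  set v := F.transpose.mulVec qhat with hvdef
  have huwv : ∀ j, u j = w j + v j := by
    intro j; rw [hu, hwdef, hvdef, Matrix.mulVec_add]; rfl
  have hwτ : ∀ j, |w j| ≤ τ := by
    intro j
    have h1 : |w j| ≤ ∑ i, |F i j * ahat i| := by
      rw [hwdef]
      simpa [Matrix.mulVec, dotProduct, Matrix.transpose_apply] using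
        Finset.abs_sum_le_sum_abs (fun i => F i j * ahat i) Finset.univ
    have h2 : ∑ i, |F i j * ahat i| ≤ ∑ i, |ahat i| * U := by
      apply Finset.sum_le_sum
      intro i _
      rw [abs_mul]
      calc |F i j| * |ahat i| ≤ U * |ahat i| :=
            mul_le_mul_of_nonneg_right (hFU i j) (abs_nonneg _)
        _ = |ahat i| * U := mul_comm _ _
    calc |w j| ≤ ∑ i, |ahat i| * U := h1.trans h2
      _ = (∑ i, |ahat i|) * U := (Finset.sum_mul _ _ _).symm
      _ ≤ τ := hτ
  set E := ∑ i, u i ^ 2 with hEdef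
  have hEiso : E = ∑ i, (ahat i + qhat i) ^ 2 := by
    rw [hEdef, hu]
    have := isom F hF (ahat + qhat)
    simpa [Pi.add_apply] using this
  have hv2 : ∑ j, v j ^ 2 = q2 := by rw [hvdef, hq2def]; exact isom F hF qhat
  -- sqrt facts
  set sa := Real.sqrt a2 with hsadef
  set sq := Real.sqrt q2 with hsqdef
  have hsa2 : sa ^ 2 = a2 := Real.sq_sqrt ha2.le
  have hsq2 : sq ^ 2 = q2 := Real.sq_sqrt hq2nn
  have hsa0 : 0 < sa := Real.sqrt_pos.2 ha2
  have hsq0 : 0 ≤ sq := Real.sqrt_nonneg _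
  set ip := ∑ i, ahat i * qhat i with hipdef
  have hip : ip ^ 2 ≤ a2 * q2 := Finset.sum_mul_sq_le_sq_mul_sq _ _ _
  have hip' : -(sa * sq) ≤ ip := by
    have h1 : (-ip) ^ 2 ≤ (sa * sq) ^ 2 := by
      rw [mul_pow, hsa2, hsq2]; nlinarith only [hip]
    have h2 := le_of_sq_le_sq'' h1 (mul_nonneg hsa0.le hsq0)
    linarith only [h2]
  have hEexp : E = a2 + 2 * ip + q2 := by
    rw [hEiso, ha2def, hq2def, hipdef]
    rw [Finset.mul_sum, ← Finset.sum_add_distrib, ← Finset.sum_add_distrib]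
    exact Finset.sum_congr rfl fun i _ => by ring
  have hElb : a2 ≤ 4 * E := arith_Elb hsa2 hsq2 hsa0 hsq0 hq hζ2 hip' hEexp
  have hE0 : 0 < E := by linarith only [hElb, ha2]
  set sE := Real.sqrt E with hsEdef
  have hsE2 : sE ^ 2 = E := Real.sq_sqrt hE0.le
  have hsE0 : 0 < sE := Real.sqrt_pos.2 hE0
  have hsaE : sa ≤ 2 * sE := by
    have h4E : Real.sqrt (4 * E) = 2 * sE := by
      rw [show (4:ℝ) * E = 2 ^ 2 * E by ring, Real.sqrt_mul (by norm_num) E,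
        Real.sqrt_sq (by norm_num : (0:ℝ) ≤ 2)]
    calc sa ≤ Real.sqrt (4 * E) := Real.sqrt_le_sqrt hElb
      _ = 2 * sE := h4E
  -- truncated values
  set p : Fin N → ℝ := fun j => (min |u j| τ) ^ 2 with hpdef
  have hp0 : ∀ j, 0 ≤ p j := fun j => sq_nonneg _
  have hmin0 : ∀ j, 0 ≤ min |u j| τ := fun j => le_min (abs_nonneg _) hτ0.le
  have hpb : ∀ j, p j ≤ b := by
    intro j
    show (min |u j| τ) ^ 2 ≤ τ ^ 2
    have h1 := min_le_right |u j| τ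
    have h2 := hmin0 j
    nlinarith only [h1, h2]
  set S := ∑ j, p j with hSdef
  have hSE : S ≤ E := by
    apply Finset.sum_le_sum
    intro j _
    show (min |u j| τ) ^ 2 ≤ u j ^ 2
    have h1 := min_le_left |u j| τ
    have h2 := hmin0 j
    nlinarith only [h1, h2, sq_abs (u j)]
  have hbias : E - S ≤ 4 * ζ * E := by
    have hsum : E - S ≤ 2 * ∑ j, |v j| * |u j| := by
      rw [hEdef, hSdef, ← Finset.sum_sub_distrib, Finset.mul_sum]
      exact Finset.sum_le_sum fun j _ =>
        arith_trunc (hwτ j) hτ0.le (huwv j) rfl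
    have hcs : (∑ j, |v j| * |u j|) ^ 2 ≤ (sq * sE) ^ 2 := by
      have h := Finset.sum_mul_sq_le_sq_mul_sq Finset.univ (fun j => |v j|) (fun j => |u j|)
      simp only [sq_abs] at h
      rw [mul_pow, hsq2, hsE2]
      calc (∑ j, |v j| * |u j|) ^ 2 ≤ (∑ j, v j ^ 2) * ∑ j, u j ^ 2 := h
        _ = q2 * E := by rw [hv2]
    have hcs2 : ∑ j, |v j| * |u j| ≤ sq * sE :=
      le_of_sq_le_sq'' hcs (mul_nonneg hsq0 hsE0.le)
    have h5 : sq * sE ≤ ζ * sa * sE := mul_le_mul_of_nonneg_right hq hsE0.le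
    have h6 : ζ * sa * sE ≤ ζ * (2 * sE) * sE :=
      mul_le_mul_of_nonneg_right (mul_le_mul_of_nonneg_left hsaE hζ0.le) hsE0.le
    have h7 : ζ * (2 * sE) * sE = 2 * ζ * E := by rw [← hsE2]; ring
    linarith only [hsum, hcs2, h5, h6, h7]
  have hS0 : 0 < S := by
    have hj : ∃ j, u j ≠ 0 := by
      by_contra h
      push_neg at h
      have : E = 0 := by rw [hEdef]; simp [h]
      linarith only [this, hE0]
    obtain ⟨j₁, hj₁⟩ := hj
    apply Finset.sum_pos' (fun j _ => hp0 j)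
    refine ⟨j₁, Finset.mem_univ _, ?_⟩
    show 0 < (min |u j₁| τ) ^ 2
    have h1 : 0 < min |u j₁| τ := lt_min (abs_pos.2 hj₁) hτ0
    positivity
  -- T1 positive
  have hT1R : 0 < (T1 : ℝ) := by
    have hpos : 0 < 8 * (N:ℝ) * b * L / (ζ ^ 2 * a2) := by positivity
    calc (0:ℝ) < 8 * (N:ℝ) * b * L / (ζ ^ 2 * a2) := hpos
      _ ≤ T1 := hT1
  set m := S / (N:ℝ) with hmdef
  have hm0 : 0 < m := div_pos hS0 hNR
  have hSm : S = (N:ℝ) * m := by rw [hmdef]; field_simp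
  set t := (T1:ℝ) * (5 * ζ * E) / N with htdef
  have ht0 : 0 < t := by positivity
  -- key bound from hypothesis on T1
  have hL2 : 2 * L * (N:ℝ) * b ≤ (T1:ℝ) * ζ ^ 2 * E := by
    rw [div_le_iff₀ (by positivity)] at hT1
    have h0 : ζ ^ 2 * a2 ≤ ζ ^ 2 * (4 * E) := mul_le_mul_of_nonneg_left hElb (sq_nonneg ζ)
    have h1 : (T1:ℝ) * (ζ ^ 2 * a2) ≤ (T1:ℝ) * (ζ ^ 2 * (4 * E)) :=
      mul_le_mul_of_nonneg_left h0 hT1R.le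
    linarith only [hT1, h1]
  -- choice of s
  set s := min (t / (2 * T1 * m * b)) (1 / b) with hsdef
  have hs0 : 0 < s := lt_min (by positivity) (by positivity)
  have hsb1 : s * b ≤ 1 := by
    calc s * b ≤ (1/b) * b := mul_le_mul_of_nonneg_right (min_le_right _ _) hb.le
      _ = 1 := by field_simp
  have hsb0 : 0 ≤ s * b := by positivity
  have hkey : (T1:ℝ) * m * s ^ 2 * b - s * t ≤ -L := by
    rcases le_total (t / (2 * T1 * m * b)) (1 / b) with hc | hc
    · -- s = t / (2 T1 m b)
      have hse : s = t / (2 * T1 * m * b) := min_eq_left hc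
      have hseq : s * (2 * T1 * m * b) = t := by
        rw [hse]; field_simp
      have hstL : 2 * L ≤ s * t := by
        have hgoal : 2 * L * (2 * (T1:ℝ) * m * b) ≤ t * t := by
          have h1 : 2 * L * (2 * (T1:ℝ) * m * b) * (N:ℝ)^2 ≤ t * t * (N:ℝ)^2 := by
            have e1 : 2 * L * (2 * (T1:ℝ) * m * b) * (N:ℝ)^2
                = (2 * L * (N:ℝ) * b) * (2 * (T1:ℝ) * S) := by
              rw [hSm]; ring
            have e2 : t * t * (N:ℝ)^2 = 25 * (T1:ℝ)^2 * ζ^2 * E^2 := by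
              rw [htdef]; field_simp; ring
            rw [e1, e2]
            have k1 : (2 * L * (N:ℝ) * b) * (2 * (T1:ℝ) * S)
                ≤ ((T1:ℝ) * ζ^2 * E) * (2 * (T1:ℝ) * S) :=
              mul_le_mul_of_nonneg_right hL2 (by positivity)
            have k2 : ((T1:ℝ) * ζ^2 * E) * (2 * (T1:ℝ) * S)
                ≤ ((T1:ℝ) * ζ^2 * E) * (2 * (T1:ℝ) * E) := by
              apply mul_le_mul_of_nonneg_left _ (by positivity)
              have := mul_le_mul_of_nonneg_left hSE
                (show (0:ℝ) ≤ 2 * (T1:ℝ) by positivity)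
              linarith only [this]
            have k3 : (0:ℝ) ≤ ((T1:ℝ) * ζ * E) ^ 2 := sq_nonneg _
            nlinarith only [k1, k2, k3]
          have h2 := (mul_le_mul_iff_of_pos_right (by positivity : (0:ℝ) < (N:ℝ)^2)).1 h1
          linarith only [h2]
        have h2 : s * t * (2 * (T1:ℝ) * m * b) = t * t := by
          rw [show s * t * (2 * (T1:ℝ) * m * b) = (s * (2 * T1 * m * b)) * t by ring, hseq]
        have h3 : 2 * L * (2 * (T1:ℝ) * m * b) ≤ s * t * (2 * (T1:ℝ) * m * b) := by
          rw [h2]; exact hgoal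
        exact (mul_le_mul_iff_of_pos_right (by positivity : (0:ℝ) < 2 * (T1:ℝ) * m * b)).1 h3
      have heq : (T1:ℝ) * m * s ^ 2 * b = s * t / 2 := by
        rw [← hseq]; ring
      rw [heq]; linarith only [hstL]
    · -- s = 1/b
      have hse : s = 1 / b := min_eq_right hc
      have hsb : s * b = 1 := by rw [hse]; field_simp
      have h2T1m : 2 * (T1:ℝ) * m ≤ t := by
        have h1 := (div_le_div_iff₀ hb (by positivity : (0:ℝ) < 2 * (T1:ℝ) * m * b)).1 hc
        have h2 : (2 * (T1:ℝ) * m) * b ≤ t * b := by linarith only [h1]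
        exact (mul_le_mul_iff_of_pos_right hb).1 h2
      have heq : (T1:ℝ) * m * s ^ 2 * b - s * t = s * ((T1:ℝ) * m - t) := by
        linear_combination ((T1:ℝ) * m * s) * hsb
      rw [heq]
      have hLt : L * (2 * b) ≤ t := by
        have hz : ((T1:ℝ) * ζ * E) * ζ ≤ ((T1:ℝ) * ζ * E) * (1/2) :=
          mul_le_mul_of_nonneg_left hζ2 (by positivity)
        have h3 : t * (N:ℝ) = 5 * (T1:ℝ) * ζ * E := by
          rw [htdef]; field_simp
        have hTζE : (0:ℝ) ≤ (T1:ℝ) * ζ * E := by positivity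
        have h4 : L * (2 * b) * (N:ℝ) ≤ t * (N:ℝ) := by
          rw [h3]; nlinarith only [hL2, hz, hTζE]
        exact (mul_le_mul_iff_of_pos_right hNR).1 h4
      have h5 : s * ((T1:ℝ) * m - t) ≤ s * (-(t/2)) :=
        mul_le_mul_of_nonneg_left (by linarith only [h2T1m]) hs0.le
      have h6 : s * (-(t/2)) = -(t / (2*b)) := by
        rw [hse]; ring
      have h7 : L ≤ t / (2*b) := by
        rw [le_div_iff₀ (by positivity)]; linarith only [hLt]
      linarith only [h5, h6, h7]
  -- the two bad sets
  set bad1 := Finset.univ.filter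
    (fun J : Fin T1 → Fin N => (T1:ℝ) * m + t ≤ ∑ i, p (J i)) with hbad1def
  set bad2 := Finset.univ.filter
    (fun J : Fin T1 → Fin N => ∑ i, p (J i) ≤ (T1:ℝ) * m - t) with hbad2def
  have hNpos : 0 < N := hN
  have hcoef : 0 ≤ (T1:ℝ) * (S / ((N:ℝ) * b)) := by positivity
  have hSb : S / ((N:ℝ) * b) = m / b := by rw [hSm]; field_simp
  have hbad1card : (bad1.card : ℝ) ≤ (N:ℝ)^T1 * Real.exp (-L) := by
    have htail := tail_gen hNpos p b (s * ((T1:ℝ) * m + t)) s hb hp0 hpb bad1 ?_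
    · refine htail.trans ?_
      apply mul_le_mul_of_nonneg_left _ (by positivity)
      rw [Real.exp_le_exp]
      have he1 : Real.exp (s * b) - 1 ≤ s * b + (s * b) ^ 2 := by
        have := exp_quad (y := s * b) (by rw [abs_of_nonneg hsb0]; exact hsb1)
        linarith only [this]
      have h1 : (T1:ℝ) * (S / ((N:ℝ) * b)) * (Real.exp (s * b) - 1)
          ≤ (T1:ℝ) * (S / ((N:ℝ) * b)) * (s * b + (s * b)^2) :=
        mul_le_mul_of_nonneg_left he1 hcoef
      have h2 : (T1:ℝ) * (S / ((N:ℝ) * b)) * (s * b + (s * b)^2)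
          = (T1:ℝ) * m * s + (T1:ℝ) * m * s^2 * b := by
        rw [hSb]; field_simp
      rw [h2] at h1
      rw [← hSdef]
      linarith only [h1, hkey]
    · intro J hJ
      rw [hbad1def, Finset.mem_filter] at hJ
      have h2 : s * ((T1:ℝ) * m + t) ≤ s * ∑ i, p (J i) :=
        mul_le_mul_of_nonneg_left hJ.2 hs0.le
      calc s * ((T1:ℝ) * m + t) ≤ s * ∑ i, p (J i) := h2
        _ = ∑ i, s * p (J i) := Finset.mul_sum _ _ _
  have hbad2card : (bad2.card : ℝ) ≤ (N:ℝ)^T1 * Real.exp (-L) := by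
    have htail := tail_gen hNpos p b (-(s * ((T1:ℝ) * m - t))) (-s) hb hp0 hpb bad2 ?_
    · refine htail.trans ?_
      apply mul_le_mul_of_nonneg_left _ (by positivity)
      rw [Real.exp_le_exp]
      have he1 : Real.exp (-s * b) - 1 ≤ -(s * b) + (s * b) ^ 2 := by
        have h := exp_quad (y := -s * b)
          (by rw [abs_of_nonpos (by linarith only [hsb0] : -s * b ≤ 0)]; linarith only [hsb1])
        nlinarith only [h]
      have h1 : (T1:ℝ) * (S / ((N:ℝ) * b)) * (Real.exp (-s * b) - 1)
          ≤ (T1:ℝ) * (S / ((N:ℝ) * b)) * (-(s * b) + (s * b)^2) :=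
        mul_le_mul_of_nonneg_left he1 hcoef
      have h2 : (T1:ℝ) * (S / ((N:ℝ) * b)) * (-(s * b) + (s * b)^2)
          = -((T1:ℝ) * m * s) + (T1:ℝ) * m * s^2 * b := by
        rw [hSb]; field_simp
      rw [h2] at h1
      rw [← hSdef]
      linarith only [h1, hkey]
    · intro J hJ
      rw [hbad2def, Finset.mem_filter] at hJ
      have h2 : s * ∑ i, p (J i) ≤ s * ((T1:ℝ) * m - t) :=
        mul_le_mul_of_nonneg_left hJ.2 hs0.le
      calc -(s * ((T1:ℝ) * m - t)) ≤ -(s * ∑ i, p (J i)) := by linarith only [h2]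
        _ = ∑ i, -s * p (J i) := by rw [← Finset.mul_sum]; ring
  -- exp(-L) = μ/2
  have hexpL : Real.exp (-L) = μ / 2 := by
    rw [hLdef, Real.exp_neg, Real.exp_log (by positivity)]
    field_simp
  -- covering argument
  set G := Finset.univ.filter (fun J : Fin T1 → Fin N =>
    |(N : ℝ) / (T1 : ℝ) * ∑ i : Fin T1, (min |u (J i)| τ) ^ 2 - E| ≤
      9 * ζ * E) with hGdef
  have hcover : ∀ J : Fin T1 → Fin N, J ∉ G → J ∈ bad1 ∪ bad2 := by
    intro J hJ
    rw [hGdef, Finset.mem_filter] at hJ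
    push_neg at hJ
    have hJ2 := hJ (Finset.mem_univ _)
    have hSveq : ∑ i : Fin T1, (min |u (J i)| τ) ^ 2 = ∑ i : Fin T1, p (J i) := rfl
    rw [hSveq] at hJ2
    set Sv := ∑ i : Fin T1, p (J i) with hSvdef
    set d := Sv - (T1:ℝ) * m with hddef
    have hΘ : (N:ℝ) / (T1:ℝ) * Sv - E = (N:ℝ)/(T1:ℝ) * d + (S - E) := by
      rw [hddef, hSm]; field_simp; ring
    have habsS : |S - E| ≤ 4 * ζ * E := by
      rw [abs_of_nonpos (by linarith only [hSE])]; linarith only [hbias]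
    have htri : |(N:ℝ)/(T1:ℝ) * Sv - E| ≤ |(N:ℝ)/(T1:ℝ) * d| + |S - E| := by
      rw [hΘ]; exact abs_add_le _ _
    have h5 : 5 * ζ * E < |(N:ℝ)/(T1:ℝ) * d| := by
      linarith only [hJ2, htri, habsS]
    have habsd : |(N:ℝ)/(T1:ℝ) * d| = (N:ℝ)/(T1:ℝ) * |d| := by
      rw [abs_mul, abs_of_pos (by positivity : (0:ℝ) < (N:ℝ)/(T1:ℝ))]
    rw [habsd] at h5
    have htd : t < |d| := by
      have h6 := mul_lt_mul_of_pos_left h5 (by positivity : (0:ℝ) < (T1:ℝ)/(N:ℝ))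
      have h7 : (T1:ℝ)/(N:ℝ) * ((N:ℝ)/(T1:ℝ) * |d|) = |d| := by field_simp
      have h8 : (T1:ℝ)/(N:ℝ) * (5 * ζ * E) = t := by rw [htdef]; field_simp
      rw [h7, h8] at h6
      exact h6
    rcases le_or_gt ((T1:ℝ) * m) Sv with hcase | hcase
    · apply Finset.mem_union_left
      rw [hbad1def, Finset.mem_filter]
      refine ⟨Finset.mem_univ _, ?_⟩
      have habs : |d| = d := abs_of_nonneg (by rw [hddef]; linarith only [hcase])
      rw [habs, hddef] at htd
      linarith only [htd]
    · apply Finset.mem_union_right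
      rw [hbad2def, Finset.mem_filter]
      refine ⟨Finset.mem_univ _, ?_⟩
      have habs : |d| = -d := abs_of_neg (by rw [hddef]; linarith only [hcase])
      rw [habs, hddef] at htd
      linarith only [htd]
  -- final counting
  have hcardU : (Fintype.card (Fin T1 → Fin N) : ℝ) = (N:ℝ)^T1 := by
    rw [Fintype.card_fun]
    push_cast
    simp
  have hsplit : (Fintype.card (Fin T1 → Fin N) : ℕ) ≤ G.card + (bad1.card + bad2.card) := by
    have h1 : (Finset.univ : Finset (Fin T1 → Fin N)).card ≤ (G ∪ (bad1 ∪ bad2)).card := by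
      apply Finset.card_le_card
      intro J _
      rcases Classical.em (J ∈ G) with h | h
      · exact Finset.mem_union_left _ h
      · exact Finset.mem_union_right _ (hcover J h)
    calc (Fintype.card (Fin T1 → Fin N) : ℕ)
        = (Finset.univ : Finset (Fin T1 → Fin N)).card := Finset.card_univ.symm
      _ ≤ (G ∪ (bad1 ∪ bad2)).card := h1
      _ ≤ G.card + (bad1 ∪ bad2).card := Finset.card_union_le _ _
      _ ≤ G.card + (bad1.card + bad2.card) :=
          Nat.add_le_add_left (Finset.card_union_le _ _) _
  have hsplitR : ((N:ℝ)^T1 : ℝ) ≤ (G.card : ℝ) + ((bad1.card : ℝ) + (bad2.card : ℝ)) := by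
    rw [← hcardU]
    exact_mod_cast hsplit
  have hfinal : (1 - μ) * (N:ℝ)^T1 ≤ (G.card : ℝ) := by
    have h1 : (bad1.card : ℝ) + (bad2.card : ℝ) ≤ (N:ℝ)^T1 * μ := by
      rw [hexpL] at hbad1card hbad2card
      linarith only [hbad1card, hbad2card]
    linarith only [hsplitR, h1]
  rw [hcardU]
  exact hfinal
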